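/- Let l : ℕ → ℕ be strictly increasing, Q ⊆ 2^ω a closed set, and F a finite tree of height h. Then the family 𝒯(Q, F) of l-branching skeletal trees T extending F with [T] ⊆ Q is a closed subset of the space of all sets of strings with the product topology (and hence compact). -/

import Mathlib

open scoped ENNReal

/-- The length-`n` prefix of a point of Cantor space `2^ω = ℕ → Bool`, as a binary string. -/
def pre (x : ℕ → Bool) (n : ℕ) : List Bool := (List.range n).map x

/-- `σ` is a (finite) prefix of `x ∈ 2^ω`. -/
def PrefOf (σ : List Bool) (x : ℕ → Bool) : Prop := pre x σ.length = σ

/-- The cylinder `[σ] = {x ∈ 2^ω : σ ⪯ x}`. -/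
def cyl (σ : List Bool) : Set (ℕ → Bool) := {x | PrefOf σ x}

/-- `[V] = ⋃_{σ ∈ V} [σ]`. -/
def cylSet (V : Set (List Bool)) : Set (ℕ → Bool) := ⋃ σ ∈ V, cyl σ

/-- A tree: a set of binary strings closed under prefixes. -/
def IsTree (T : Set (List Bool)) : Prop := ∀ σ ∈ T, ∀ τ : List Bool, τ <+: σ → τ ∈ T

/-- A pruned tree: every node has a proper extension in the tree. -/
def Pruned (T : Set (List Bool)) : Prop := ∀ σ ∈ T, ∃ τ ∈ T, σ <+: τ ∧ σ ≠ τ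

/-- The set `[T]` of paths of a tree `T`. -/
def paths (T : Set (List Bool)) : Set (ℕ → Bool) := {x | ∀ n, pre x n ∈ T}

/-- The fair-coin (uniform) product measure on Cantor space, characterized by its
values `μ [σ] = 2^{-|σ|}` on cylinders (this determines `μ` uniquely). -/
def IsFairCoin (μ : MeasureTheory.Measure (ℕ → Bool)) : Prop :=
  ∀ σ : List Bool, μ (cyl σ) = 2⁻¹ ^ σ.length

/-- Two strings are incomparable: neither is a prefix of the other. -/
def Incomparable (τ₁ τ₂ : List Bool) : Prop := ¬τ₁ <+: τ₂ ∧ ¬τ₂ <+: τ₁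

/-- `σ` branches in `T`: it has at least two incomparable extensions in `T`. -/
def Branches (T : Set (List Bool)) (σ : List Bool) : Prop :=
  ∃ τ₁ ∈ T, ∃ τ₂ ∈ T, σ <+: τ₁ ∧ σ <+: τ₂ ∧ Incomparable τ₁ τ₂

/-- `T` is skeletal with main branch `z`: `z ∈ [T]` and a node of `T` branches in `T`
iff it is a prefix of `z`. -/
def SkeletalWithBranch (T : Set (List Bool)) (z : ℕ → Bool) : Prop :=
  z ∈ paths T ∧ ∀ σ ∈ T, (Branches T σ ↔ PrefOf σ z)

/-- A skeletal tree `T` with main branch `z` is `l`-branching: for every `i`, the prefix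
of `z` of length `l i` has at least two incomparable extensions in `T` of length at
most `l (i+1)`. -/
def LBranchingSkel (l : ℕ → ℕ) (T : Set (List Bool)) (z : ℕ → Bool) : Prop :=
  ∀ i : ℕ, ∃ τ₁ ∈ T, ∃ τ₂ ∈ T, pre z (l i) <+: τ₁ ∧ pre z (l i) <+: τ₂ ∧
    τ₁.length ≤ l (i + 1) ∧ τ₂.length ≤ l (i + 1) ∧ Incomparable τ₁ τ₂

/-- `F` is a finite tree of height `h`: nonempty, prefix-closed, every element has
length at most `h`, and every maximal element has length exactly `h`. -/
def FinTree (F : Finset (List Bool)) (h : ℕ) : Prop :=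
  F.Nonempty ∧ (∀ σ ∈ F, ∀ τ : List Bool, τ <+: σ → τ ∈ F) ∧
    ∀ σ ∈ F, σ.length ≤ h ∧ ((∀ τ ∈ F, σ <+: τ → σ = τ) → σ.length = h)

/-- A tree `T` extends a finite tree `F` of height `h`: `F = T ∩ 2^{≤ h}`. -/
def ExtendsFin (T : Set (List Bool)) (F : Finset (List Bool)) (h : ℕ) : Prop :=
  ∀ σ : List Bool, σ.length ≤ h → (σ ∈ T ↔ σ ∈ F)

/-- The class `𝒯(Q, F)` of `l`-branching skeletal trees extending `F` (of height `h`)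
all of whose paths lie in `Q`. -/
def TQF (l : ℕ → ℕ) (Q : Set (ℕ → Bool)) (F : Finset (List Bool)) (h : ℕ)
    (T : Set (List Bool)) : Prop :=
  IsTree T ∧ Pruned T ∧ (∃ z : ℕ → Bool, SkeletalWithBranch T z ∧ LBranchingSkel l T z) ∧
    ExtendsFin T F h ∧ paths T ⊆ Q

/-- The set of strings coded by a characteristic function. -/
def toSet (T : List Bool → Bool) : Set (List Bool) := {σ | T σ = true}



@[simp] lemma S6.pre_length (x : ℕ → Bool) (n : ℕ) : (pre x n).length = n := by simp [pre]

lemma S6.pre_getElem (x : ℕ → Bool) {n i : ℕ} (hi : i < n) :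
    (pre x n)[i]'(by simp [pre, hi]) = x i := by simp [pre]

lemma S6.pre_prefix (x : ℕ → Bool) {m n : ℕ} (hmn : m ≤ n) : pre x m <+: pre x n := by
  have : pre x m = (pre x n).take m := by
    apply List.ext_getElem <;> simp [hmn, Nat.min_eq_left, S6.pre_getElem]
    simp [pre]
  rw [this]; exact List.take_prefix _ _

lemma S6.prefOf_pre (x : ℕ → Bool) (n : ℕ) : PrefOf (pre x n) x := by
  show pre x (pre x n).length = pre x n; rw [S6.pre_length]

lemma S6.PrefOf.prefix_pre {σ : List Bool} {x : ℕ → Bool} (h : PrefOf σ x) {n : ℕ}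
    (hn : σ.length ≤ n) : σ <+: pre x n := by
  conv_lhs => rw [← h]
  exact S6.pre_prefix x hn

lemma S6.prefOf_iff {σ : List Bool} {z : ℕ → Bool} :
    PrefOf σ z ↔ ∀ i < σ.length, z i = σ.getD i false := by
  constructor
  · intro h i hi
    have h2 := S6.pre_getElem z (n := σ.length) hi
    have h3 : (pre z σ.length).getD i false = σ.getD i false := by rw [h]
    rw [List.getD_eq_getElem _ _ (by simpa using hi)] at h3
    rw [h2] at h3; exact h3
  · intro h
    apply List.ext_getElem (by simp)
    intro i h1 h2
    rw [S6.pre_getElem z h2, h i h2]; simp [h2]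

lemma S6.pre_eq_iff {σ : List Bool} {z : ℕ → Bool} {n : ℕ} :
    pre z n = σ ↔ σ.length = n ∧ PrefOf σ z := by
  constructor
  · rintro rfl; exact ⟨by simp, S6.prefOf_pre z n⟩
  · rintro ⟨rfl, hp⟩; exact hp

lemma S6.clopen_mem (σ : List Bool) : IsClopen {T : List Bool → Bool | T σ = true} := by
  have h : {T : List Bool → Bool | T σ = true}
      = (fun T : List Bool → Bool => T σ) ⁻¹' {true} := by ext T; simp
  rw [h]; exact (isClopen_discrete _).preimage (continuous_apply σ)

lemma S6.clopen_memZ (i : ℕ) (b : Bool) : IsClopen {z : ℕ → Bool | z i = b} := by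
  have h : {z : ℕ → Bool | z i = b} = (fun z : ℕ → Bool => z i) ⁻¹' {b} := by ext; simp
  rw [h]; exact (isClopen_discrete _).preimage (continuous_apply i)

lemma S6.clopen_cyl (σ : List Bool) : IsClopen (cyl σ) := by
  have h : cyl σ = ⋂ i ∈ Finset.range σ.length, {z : ℕ → Bool | z i = σ.getD i false} := by
    ext z
    simp only [cyl, Set.mem_setOf_eq, Set.mem_iInter, Finset.mem_range]
    exact S6.prefOf_iff
  rw [h]
  exact isClopen_biInter_finset fun i _ => S6.clopen_memZ i _

lemma S6.isClosed_iUnion_prop {X : Type*} [TopologicalSpace X] {p : Prop} {s : Set X}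
    (hs : IsClosed s) : IsClosed (⋃ (_ : p), s) := by
  by_cases hp : p
  · simpa [hp] using hs
  · simp [hp]

lemma S6.closed_K1 (n : ℕ) :
    IsClosed {p : (List Bool → Bool) × (ℕ → Bool) | p.1 (pre p.2 n) = true} := by
  have h : {p : (List Bool → Bool) × (ℕ → Bool) | p.1 (pre p.2 n) = true}
      = ⋃ σ ∈ {σ : List Bool | σ.length = n},
          {T : List Bool → Bool | T σ = true} ×ˢ cyl σ := by
    ext ⟨T, z⟩
    simp only [Set.mem_setOf_eq, Set.mem_iUnion, Set.mem_prod, cyl]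
    constructor
    · intro hT
      exact ⟨pre z n, by simp, hT, S6.prefOf_pre z n⟩
    · rintro ⟨σ, hlen, hT, hz⟩
      have : pre z n = σ := S6.pre_eq_iff.mpr ⟨hlen, hz⟩
      rwa [this]
  rw [h]
  exact (List.finite_length_eq Bool n).isClosed_biUnion fun σ _ =>
    ((S6.clopen_mem σ).isClosed.prod (S6.clopen_cyl σ).isClosed)

lemma S6.open_branches (σ : List Bool) :
    IsOpen {T : List Bool → Bool | Branches (toSet T) σ} := by
  have h : {T : List Bool → Bool | Branches (toSet T) σ}
      = ⋃ τ₁, ⋃ τ₂, ⋃ (_ : σ <+: τ₁ ∧ σ <+: τ₂ ∧ Incomparable τ₁ τ₂),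
          ({T : List Bool → Bool | T τ₁ = true} ∩ {T | T τ₂ = true}) := by
    ext T
    simp only [Set.mem_setOf_eq, Branches, toSet, Set.mem_iUnion, Set.mem_inter_iff]
    constructor
    · rintro ⟨τ₁, h1, τ₂, h2, hp1, hp2, hinc⟩
      exact ⟨τ₁, τ₂, ⟨hp1, hp2, hinc⟩, h1, h2⟩
    · rintro ⟨τ₁, τ₂, ⟨hp1, hp2, hinc⟩, h1, h2⟩
      exact ⟨τ₁, h1, τ₂, h2, hp1, hp2, hinc⟩
  rw [h]
  exact isOpen_iUnion fun τ₁ => isOpen_iUnion fun τ₂ => isOpen_iUnion fun _ =>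
    ((S6.clopen_mem τ₁).isOpen.inter (S6.clopen_mem τ₂).isOpen)

lemma S6.closed_K2 (σ : List Bool) :
    IsClosed {p : (List Bool → Bool) × (ℕ → Bool) |
      p.1 σ = true → Branches (toSet p.1) σ → PrefOf σ p.2} := by
  have h : {p : (List Bool → Bool) × (ℕ → Bool) |
        p.1 σ = true → Branches (toSet p.1) σ → PrefOf σ p.2}
      = (({T : List Bool → Bool | T σ = true} ∩ {T | Branches (toSet T) σ})
          ×ˢ (Set.univ : Set (ℕ → Bool)))ᶜ ∪ ((Set.univ : Set (List Bool → Bool)) ×ˢ cyl σ) := by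
    ext ⟨T, z⟩
    simp only [Set.mem_setOf_eq, Set.mem_union, Set.mem_compl_iff, Set.mem_prod,
      Set.mem_inter_iff, Set.mem_univ, and_true, true_and, cyl]
    tauto
  rw [h]
  refine IsClosed.union (isClosed_compl_iff.mpr ?_) (isClosed_univ.prod (S6.clopen_cyl σ).isClosed)
  exact ((S6.clopen_mem σ).isOpen.inter (S6.open_branches σ)).prod isOpen_univ

lemma S6.closed_P (σ : List Bool) (m : ℕ) :
    IsClosed {T : List Bool → Bool | ∃ τ₁ ∈ toSet T, ∃ τ₂ ∈ toSet T,
      σ <+: τ₁ ∧ σ <+: τ₂ ∧ τ₁.length ≤ m ∧ τ₂.length ≤ m ∧ Incomparable τ₁ τ₂} := by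
  have h : {T : List Bool → Bool | ∃ τ₁ ∈ toSet T, ∃ τ₂ ∈ toSet T,
        σ <+: τ₁ ∧ σ <+: τ₂ ∧ τ₁.length ≤ m ∧ τ₂.length ≤ m ∧ Incomparable τ₁ τ₂}
      = ⋃ τ₁ ∈ {τ : List Bool | τ.length ≤ m}, ⋃ τ₂ ∈ {τ : List Bool | τ.length ≤ m},
          ⋃ (_ : σ <+: τ₁ ∧ σ <+: τ₂ ∧ Incomparable τ₁ τ₂),
            ({T : List Bool → Bool | T τ₁ = true} ∩ {T | T τ₂ = true}) := by
    ext T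
    simp only [Set.mem_setOf_eq, toSet, Set.mem_iUnion, Set.mem_inter_iff]
    constructor
    · rintro ⟨τ₁, h1, τ₂, h2, hp1, hp2, hl1, hl2, hinc⟩
      exact ⟨τ₁, hl1, τ₂, hl2, ⟨hp1, hp2, hinc⟩, h1, h2⟩
    · rintro ⟨τ₁, hl1, τ₂, hl2, ⟨hp1, hp2, hinc⟩, h1, h2⟩
      exact ⟨τ₁, h1, τ₂, h2, hp1, hp2, hl1, hl2, hinc⟩
  rw [h]
  exact (List.finite_length_le Bool m).isClosed_biUnion fun τ₁ _ =>
    (List.finite_length_le Bool m).isClosed_biUnion fun τ₂ _ =>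
      S6.isClosed_iUnion_prop ((S6.clopen_mem τ₁).isClosed.inter (S6.clopen_mem τ₂).isClosed)

lemma S6.closed_K3 (l : ℕ → ℕ) (i : ℕ) :
    IsClosed {p : (List Bool → Bool) × (ℕ → Bool) |
      ∃ τ₁ ∈ toSet p.1, ∃ τ₂ ∈ toSet p.1, pre p.2 (l i) <+: τ₁ ∧ pre p.2 (l i) <+: τ₂ ∧
        τ₁.length ≤ l (i + 1) ∧ τ₂.length ≤ l (i + 1) ∧ Incomparable τ₁ τ₂} := by
  have h : {p : (List Bool → Bool) × (ℕ → Bool) |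
        ∃ τ₁ ∈ toSet p.1, ∃ τ₂ ∈ toSet p.1, pre p.2 (l i) <+: τ₁ ∧ pre p.2 (l i) <+: τ₂ ∧
          τ₁.length ≤ l (i + 1) ∧ τ₂.length ≤ l (i + 1) ∧ Incomparable τ₁ τ₂}
      = ⋃ σ ∈ {σ : List Bool | σ.length = l i},
          {T : List Bool → Bool | ∃ τ₁ ∈ toSet T, ∃ τ₂ ∈ toSet T,
            σ <+: τ₁ ∧ σ <+: τ₂ ∧ τ₁.length ≤ l (i + 1) ∧ τ₂.length ≤ l (i + 1) ∧
              Incomparable τ₁ τ₂} ×ˢ cyl σ := by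
    ext ⟨T, z⟩
    simp only [Set.mem_setOf_eq, Set.mem_iUnion, Set.mem_prod, cyl]
    constructor
    · intro hT
      exact ⟨pre z (l i), by simp, hT, S6.prefOf_pre z (l i)⟩
    · rintro ⟨σ, hlen, hT, hz⟩
      have hσ : pre z (l i) = σ := S6.pre_eq_iff.mpr ⟨hlen, hz⟩
      rwa [hσ]
  rw [h]
  exact (List.finite_length_eq Bool (l i)).isClosed_biUnion fun σ _ =>
    ((S6.closed_P σ (l (i + 1))).prod (S6.clopen_cyl σ).isClosed)


lemma S6.closed_E (l : ℕ → ℕ) :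
    IsClosed {T : List Bool → Bool | ∃ z : ℕ → Bool,
      (∀ n, T (pre z n) = true) ∧
      (∀ σ, T σ = true → Branches (toSet T) σ → PrefOf σ z) ∧
      LBranchingSkel l (toSet T) z} := by
  set K : Set ((List Bool → Bool) × (ℕ → Bool)) :=
    {p | (∀ n, p.1 (pre p.2 n) = true) ∧
      (∀ σ, p.1 σ = true → Branches (toSet p.1) σ → PrefOf σ p.2) ∧
      LBranchingSkel l (toSet p.1) p.2} with hKdef
  have hK : IsClosed K := by
    have h : K = (⋂ n, {p : (List Bool → Bool) × (ℕ → Bool) | p.1 (pre p.2 n) = true})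
        ∩ ((⋂ σ : List Bool, {p : (List Bool → Bool) × (ℕ → Bool) |
              p.1 σ = true → Branches (toSet p.1) σ → PrefOf σ p.2})
        ∩ (⋂ i : ℕ, {p : (List Bool → Bool) × (ℕ → Bool) |
            ∃ τ₁ ∈ toSet p.1, ∃ τ₂ ∈ toSet p.1, pre p.2 (l i) <+: τ₁ ∧ pre p.2 (l i) <+: τ₂ ∧
              τ₁.length ≤ l (i + 1) ∧ τ₂.length ≤ l (i + 1) ∧ Incomparable τ₁ τ₂})) := by
      ext ⟨T, z⟩
      simp only [hKdef, Set.mem_setOf_eq, Set.mem_inter_iff, Set.mem_iInter, LBranchingSkel]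
    rw [h]
    exact (isClosed_iInter S6.closed_K1).inter
      ((isClosed_iInter S6.closed_K2).inter (isClosed_iInter (S6.closed_K3 l)))
  have himg : {T : List Bool → Bool | ∃ z : ℕ → Bool,
      (∀ n, T (pre z n) = true) ∧
      (∀ σ, T σ = true → Branches (toSet T) σ → PrefOf σ z) ∧
      LBranchingSkel l (toSet T) z} = Prod.fst '' K := by
    ext T
    constructor
    · rintro ⟨z, hz⟩; exact ⟨(T, z), hz, rfl⟩
    · rintro ⟨⟨T', z⟩, hz, rfl⟩; exact ⟨z, hz⟩
  rw [himg]
  exact isClosedMap_fst_of_compactSpace K hK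

lemma S6.exists_path {T : Set (List Bool)} (htree : IsTree T)
    (hext : ∀ σ ∈ T, ∃ b : Bool, σ ++ [b] ∈ T) {σ : List Bool} (hσ : σ ∈ T) :
    ∃ x : ℕ → Bool, PrefOf σ x ∧ x ∈ paths T := by
  choose f hf using hext
  let g : ℕ → {τ : List Bool // τ ∈ T} := fun n =>
    Nat.rec ⟨σ, hσ⟩ (fun _ p => ⟨p.1 ++ [f p.1 p.2], hf p.1 p.2⟩) n
  have hlen : ∀ n, (g n).1.length = σ.length + n := by
    intro n; induction n with
    | zero => rfl
    | succ n ih =>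
      show ((g n).1 ++ [f (g n).1 (g n).2]).length = σ.length + (n + 1)
      simp [List.length_append, ih]; omega
  have hmono : ∀ m n, m ≤ n → (g m).1 <+: (g n).1 := by
    intro m n hmn
    induction n with
    | zero => rw [Nat.le_zero.mp hmn]
    | succ n ih =>
      rcases Nat.lt_succ_iff_lt_or_eq.mp (Nat.lt_succ_of_le hmn) with h' | h'
      · refine (ih (Nat.lt_succ_iff.mp h')).trans ?_
        exact ⟨[f (g n).1 (g n).2], rfl⟩
      · rw [h']
  set x : ℕ → Bool := fun n => (g (n + 1)).1.getD n false with hxdef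
  have hx : ∀ m, pre x m = (g m).1.take m := by
    intro m
    apply List.ext_getElem
    · simp [hlen m]
    · intro i h1 h2
      have h1' : i < m := by simpa using h1
      rw [S6.pre_getElem x h1']
      have hi1 : i < (g (i + 1)).1.length := by rw [hlen (i + 1)]; omega
      have hpref : (g (i + 1)).1 <+: (g m).1 := hmono (i + 1) m h1'
      have him : i < (g m).1.length := by rw [hlen m]; omega
      have : x i = (g (i + 1)).1[i]'hi1 := (List.getD_eq_getElem _ _ hi1)
      rw [this, List.IsPrefix.getElem hpref hi1, List.getElem_take]
  refine ⟨x, ?_, ?_⟩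
  · show pre x σ.length = σ
    rw [hx σ.length]
    obtain ⟨t, ht⟩ := hmono 0 σ.length (Nat.zero_le _)
    have h0 : (g 0).1 = σ := rfl
    rw [h0] at ht
    rw [← ht]
    exact List.take_left
  · intro n
    have hp : pre x n <+: (g n).1 := by rw [hx n]; exact List.take_prefix _ _
    exact htree _ (g n).2 _ hp

lemma S6.paths_subset {T : Set (List Bool)} {Q : Set (ℕ → Bool)} (hQ : IsClosed Q)
    (hD : ∀ σ ∈ T, (cyl σ ∩ Q).Nonempty) : paths T ⊆ Q := by
  intro x hx
  have hne : ∀ n : ℕ, (cyl (pre x n) ∩ Q).Nonempty := fun n => hD _ (hx n)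
  choose y hy using hne
  have hagree : ∀ i n : ℕ, i < n → y n i = x i := by
    intro i n hin
    have h1 : PrefOf (pre x n) (y n) := (hy n).1
    have h2 := S6.prefOf_iff.mp h1 i (by simpa using hin)
    rw [h2]
    have := S6.pre_getElem x hin
    rw [List.getD_eq_getElem _ _ (by simpa using hin), this]
  have htend : Filter.Tendsto y Filter.atTop (nhds x) := by
    rw [tendsto_pi_nhds]
    intro i
    apply Filter.Tendsto.congr' (f₁ := fun _ => x i)
    · filter_upwards [Filter.eventually_gt_atTop i] with n hn
      exact (hagree i n hn).symm
    · exact tendsto_const_nhds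
  exact hQ.mem_of_tendsto htend (Filter.Eventually.of_forall fun n => (hy n).2)


/-- For strictly increasing `l`, closed `Q ⊆ 2^ω` and a finite tree `F`
of height `h`, the family `𝒯(Q, F)` is a closed (hence compact) subset of the space
of all sets of strings with the product topology. -/
theorem stmt_6 (l : ℕ → ℕ) (hl : StrictMono l) (Q : Set (ℕ → Bool)) (hQ : IsClosed Q)
    (F : Finset (List Bool)) (h : ℕ) (hF : FinTree F h) :
    IsClosed {T : List Bool → Bool | TQF l Q F h (toSet T)} ∧
      IsCompact {T : List Bool → Bool | TQF l Q F h (toSet T)} := by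
  have key : {T : List Bool → Bool | TQF l Q F h (toSet T)} =
      (⋂ σ : List Bool, ⋂ τ : List Bool,
        {T : List Bool → Bool | τ <+: σ → T σ = true → T τ = true}) ∩
      ((⋂ σ : List Bool,
        {T : List Bool → Bool | T σ = true → T (σ ++ [false]) = true ∨ T (σ ++ [true]) = true}) ∩
      ((⋂ σ : List Bool, {T : List Bool → Bool | σ.length ≤ h → (T σ = true ↔ σ ∈ F)}) ∩
      ((⋂ σ : List Bool, {T : List Bool → Bool | T σ = true → (cyl σ ∩ Q).Nonempty}) ∩
      {T : List Bool → Bool | ∃ z : ℕ → Bool,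
        (∀ n, T (pre z n) = true) ∧
        (∀ σ, T σ = true → Branches (toSet T) σ → PrefOf σ z) ∧
        LBranchingSkel l (toSet T) z}))) := by
    ext T
    simp only [Set.mem_setOf_eq, Set.mem_inter_iff, Set.mem_iInter]
    constructor
    · rintro ⟨htree, hpruned, ⟨z, hskel, hlb⟩, hext, hQsub⟩
      have hbranch : ∀ ρ ∈ toSet T, ∃ b : Bool, ρ ++ [b] ∈ toSet T := by
        intro ρ hρ
        obtain ⟨τ, hτT, hpre, hne⟩ := hpruned ρ hρ
        obtain ⟨t, rfl⟩ := hpre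
        cases t with
        | nil => simp at hne
        | cons b t' => exact ⟨b, htree _ hτT _ ⟨t', by simp⟩⟩
      refine ⟨?_, ?_, ?_, ?_, z, hskel.1, ?_, hlb⟩
      · intro σ τ hpre hσ; exact htree σ hσ τ hpre
      · intro σ hσ
        obtain ⟨b, hb⟩ := hbranch σ hσ
        cases b
        · exact Or.inl hb
        · exact Or.inr hb
      · intro σ hσh; exact hext σ hσh
      · intro σ hσ
        obtain ⟨x, hpx, hxp⟩ := S6.exists_path htree hbranch hσ
        exact ⟨x, hpx, hQsub hxp⟩
      · intro σ hσ hbr; exact (hskel.2 σ hσ).mp hbr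
    · rintro ⟨htree, hpruned, hext, hD, z, hz1, hz2, hz3⟩
      have htree' : IsTree (toSet T) := fun σ hσ τ hτ => htree σ τ hτ hσ
      refine ⟨htree', ?_, ⟨z, ⟨hz1, ?_⟩, hz3⟩, hext, ?_⟩
      · intro σ hσ
        rcases hpruned σ hσ with hb | hb
        · exact ⟨σ ++ [false], hb, ⟨[false], rfl⟩, by simp⟩
        · exact ⟨σ ++ [true], hb, ⟨[true], rfl⟩, by simp⟩
      · intro σ hσ
        constructor
        · exact hz2 σ hσ
        · intro hpz
          obtain ⟨τ₁, h1, τ₂, h2, hp1, hp2, _, _, hinc⟩ := hz3 σ.length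
          have hσp : σ <+: pre z (l σ.length) :=
            S6.PrefOf.prefix_pre hpz (hl.le_apply)
          exact ⟨τ₁, h1, τ₂, h2, hσp.trans hp1, hσp.trans hp2, hinc⟩
      · exact S6.paths_subset hQ hD
  have hclosed : IsClosed {T : List Bool → Bool | TQF l Q F h (toSet T)} := by
    rw [key]
    refine IsClosed.inter ?_ (IsClosed.inter ?_ (IsClosed.inter ?_
      (IsClosed.inter ?_ (S6.closed_E l))))
    · refine isClosed_iInter fun σ => isClosed_iInter fun τ => ?_
      by_cases hpre : τ <+: σ
      · have heq : {T : List Bool → Bool | τ <+: σ → T σ = true → T τ = true}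
            = {T : List Bool → Bool | T σ = true}ᶜ ∪ {T | T τ = true} := by
          ext T
          simp only [Set.mem_setOf_eq, Set.mem_union, Set.mem_compl_iff, hpre, true_implies]
          tauto
        rw [heq]
        exact ((S6.clopen_mem σ).compl.isClosed).union (S6.clopen_mem τ).isClosed
      · have heq : {T : List Bool → Bool | τ <+: σ → T σ = true → T τ = true} = Set.univ := by
          ext T; simp [hpre]
        rw [heq]; exact isClosed_univ
    · refine isClosed_iInter fun σ => ?_
      have heq : {T : List Bool → Bool |
            T σ = true → T (σ ++ [false]) = true ∨ T (σ ++ [true]) = true}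
          = {T : List Bool → Bool | T σ = true}ᶜ
            ∪ ({T : List Bool → Bool | T (σ ++ [false]) = true} ∪ {T | T (σ ++ [true]) = true}) := by
        ext T
        simp only [Set.mem_setOf_eq, Set.mem_union, Set.mem_compl_iff]
        tauto
      rw [heq]
      exact ((S6.clopen_mem σ).compl.isClosed).union
        ((S6.clopen_mem _).isClosed.union (S6.clopen_mem _).isClosed)
    · refine isClosed_iInter fun σ => ?_
      by_cases hlen : σ.length ≤ h
      · by_cases hmem : σ ∈ F
        · have heq : {T : List Bool → Bool | σ.length ≤ h → (T σ = true ↔ σ ∈ F)}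
              = {T : List Bool → Bool | T σ = true} := by
            ext T; simp [hlen, hmem]
          rw [heq]; exact (S6.clopen_mem σ).isClosed
        · have heq : {T : List Bool → Bool | σ.length ≤ h → (T σ = true ↔ σ ∈ F)}
              = {T : List Bool → Bool | T σ = true}ᶜ := by
            ext T; simp [hlen, hmem]
          rw [heq]; exact (S6.clopen_mem σ).compl.isClosed
      · have heq : {T : List Bool → Bool | σ.length ≤ h → (T σ = true ↔ σ ∈ F)}
            = Set.univ := by
          ext T; simp [hlen]
        rw [heq]; exact isClosed_univ
    · refine isClosed_iInter fun σ => ?_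
      by_cases hne : (cyl σ ∩ Q).Nonempty
      · have heq : {T : List Bool → Bool | T σ = true → (cyl σ ∩ Q).Nonempty} = Set.univ := by
          ext T; simp [hne]
        rw [heq]; exact isClosed_univ
      · have heq : {T : List Bool → Bool | T σ = true → (cyl σ ∩ Q).Nonempty}
            = {T : List Bool → Bool | T σ = true}ᶜ := by
          ext T; simp [hne]
        rw [heq]; exact (S6.clopen_mem σ).compl.isClosed
  exact ⟨hclosed, hclosed.isCompact⟩
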